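/- Let 1 < α < 2, g ∈ ℝ, K > 0, let 𝒫 be a fixed closed prolate spheroid centered at the origin, and for ε > 0 let 𝒫^ε = x₀ + ε^α R 𝒫 where R is a rotation and x₀ ∈ ℝ³. Suppose w₀ ∈ ℝ³ with |w₀| ≤ K and u ∈ L²(∂𝒫^ε; ℝ³) satisfies ∫_{∂𝒫^ε} |u − w₀|² dσ ≤ K ε⁶. Then there is a constant C depending only on 𝒫, g and K such that for all sufficiently small ε, | g ε^{3−2α} ∫_{∂𝒫^ε} (u·ν)² dσ − g ε^{3−2α} ∫_{∂𝒫^ε} (w₀·ν)² dσ | ≤ C ε^{7−2α}. -/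

import Mathlib

open MeasureTheory Filter Metric Set
open scoped RealInnerProductSpace ENNReal NNReal Topology

noncomputable section

/-- Euclidean three-space. -/
abbrev E3 : Type := EuclideanSpace ℝ (Fin 3)

/-- The closed prolate spheroid centered at the origin with semi-axis `A` along the
`x`- and `y`-directions and semi-axis `B` along the `z`-direction. -/
def sph (A B : ℝ) : Set E3 :=
  {x : E3 | (x 0) ^ 2 / A ^ 2 + (x 1) ^ 2 / A ^ 2 + (x 2) ^ 2 / B ^ 2 ≤ 1}

/-- The boundary surface of the spheroid `sph A B`. -/
def sphS (A B : ℝ) : Set E3 :=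
  {x : E3 | (x 0) ^ 2 / A ^ 2 + (x 1) ^ 2 / A ^ 2 + (x 2) ^ 2 / B ^ 2 = 1}

/-- Gradient of the defining function of the spheroid (up to a factor `2`). -/
def sphGrad (A B : ℝ) (x : E3) : E3 :=
  (WithLp.equiv 2 (Fin 3 → ℝ)).symm ![x 0 / A ^ 2, x 1 / A ^ 2, x 2 / B ^ 2]

/-- Outward unit normal to the surface of the spheroid `sph A B`. -/
def sphN (A B : ℝ) (x : E3) : E3 := ‖sphGrad A B x‖⁻¹ • sphGrad A B x

/-- A rotation of `ℝ³`: a linear isometry with determinant one. -/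
def IsRotation (R : E3 ≃ₗᵢ[ℝ] E3) : Prop :=
  LinearMap.det (R.toLinearEquiv : E3 →ₗ[ℝ] E3) = 1

/-- A particle: the image of the reference spheroid `sph A B` under `y ↦ c + s • R y`. -/
def part (A B : ℝ) (c : E3) (s : ℝ) (R : E3 ≃ₗᵢ[ℝ] E3) : Set E3 :=
  (fun y => c + s • R y) '' sph A B

/-- The boundary surface of a particle. -/
def partS (A B : ℝ) (c : E3) (s : ℝ) (R : E3 ≃ₗᵢ[ℝ] E3) : Set E3 :=
  (fun y => c + s • R y) '' sphS A B

/-- The outward unit normal on the surface of a particle. -/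
def partN (A B : ℝ) (c : E3) (s : ℝ) (R : E3 ≃ₗᵢ[ℝ] E3) (y : E3) : E3 :=
  R (sphN A B (s⁻¹ • R.symm (y - c)))


def ins (i : Fin 3) (s : ℝ) (x : Fin 2 → ℝ) : Fin 3 → ℝ :=
  Fin.insertNth (α := fun _ => ℝ) i s x

lemma lips_ins (i : Fin 3) (s : ℝ) : LipschitzWith 1 (ins i s) := by
  apply LipschitzWith.of_dist_le_mul
  intro x y
  have h1 : (↑(1:ℝ≥0) : ℝ) * dist x y = dist x y := by simp
  rw [h1]
  refine (dist_pi_le_iff dist_nonneg).2 fun j => ?_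
  rcases eq_or_ne j i with h | h
  · subst h; simpa [ins] using dist_nonneg (x := x) (y := y)
  · obtain ⟨k, rfl⟩ := Fin.exists_succAbove_eq h
    simpa [ins] using dist_le_pi_dist x y k

lemma face_fin (i : Fin 3) (s : ℝ) :
    μH[2] (ins i s '' closedBall 0 1) < ⊤ := by
  refine lt_of_le_of_lt ((lips_ins i s).hausdorffMeasure_image_le (by norm_num) _) ?_
  have h2 : (μH[2] : Measure (Fin 2 → ℝ)) = volume := by
    have := hausdorffMeasure_pi_real (ι := Fin 2)
    simpa using this
  rw [h2]
  simp only [ENNReal.coe_one, ENNReal.one_rpow, one_mul]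
  exact (isCompact_closedBall _ _).measure_lt_top

lemma sphere_pi_sub : sphere (0 : Fin 3 → ℝ) 1 ⊆
    ⋃ (i : Fin 3), (ins i 1 '' closedBall 0 1 ∪ ins i (-1) '' closedBall 0 1) := by
  intro x hx
  have hx1 : ‖x‖ = 1 := by simpa using hx
  have hex : ∃ i, ‖x i‖ = 1 := by
    by_contra h
    push_neg at h
    have : ‖x‖ < 1 := by
      rw [pi_norm_lt_iff one_pos]
      intro i
      exact lt_of_le_of_ne (le_trans (norm_le_pi_norm x i) hx1.le) (h i)
    linarith [this, hx1.ge]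
  obtain ⟨i, hi⟩ := hex
  have hmem : Fin.removeNth i x ∈ closedBall (0 : Fin 2 → ℝ) 1 := by
    rw [mem_closedBall_zero_iff]
    refine (pi_norm_le_iff_of_nonneg zero_le_one).2 fun k => ?_
    exact le_trans (norm_le_pi_norm x _) hx1.le
  refine mem_iUnion.2 ⟨i, ?_⟩
  rcases (abs_eq (zero_le_one)).1 (by simpa using hi) with h | h
  · exact Or.inl ⟨Fin.removeNth i x, hmem, by rw [← h]; exact Fin.insertNth_self_removeNth i x⟩
  · exact Or.inr ⟨Fin.removeNth i x, hmem, by rw [← h]; exact Fin.insertNth_self_removeNth i x⟩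

lemma sphere_pi_fin : μH[2] (sphere (0 : Fin 3 → ℝ) 1) < ⊤ := by
  refine lt_of_le_of_lt (measure_mono sphere_pi_sub) ?_
  refine lt_of_le_of_lt (measure_iUnion_le _) ?_
  rw [tsum_fintype]
  refine ENNReal.sum_lt_top.2 fun i _ => ?_
  exact lt_of_le_of_lt (measure_union_le _ _) (ENNReal.add_lt_top.2 ⟨face_fin i 1, face_fin i (-1)⟩)

def e3 : (Fin 3 → ℝ) → E3 := (WithLp.equiv 2 (Fin 3 → ℝ)).symm

lemma lips_e3 : LipschitzWith (Real.sqrt 3).toNNReal e3 := by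
  apply LipschitzWith.of_dist_le_mul
  intro x y
  have hc : ((Real.sqrt 3).toNNReal : ℝ) = Real.sqrt 3 := by
    rw [Real.coe_toNNReal _ (Real.sqrt_nonneg 3)]
  rw [hc]
  rw [EuclideanSpace.dist_eq]
  have hy : ∀ i : Fin 3, dist (e3 x i) (e3 y i) ≤ dist x y := fun i => by
    simpa [e3] using dist_le_pi_dist x y i
  have h1 : ∑ i : Fin 3, dist (e3 x i) (e3 y i) ^ 2 ≤ 3 * dist x y ^ 2 := by
    rw [Fin.sum_univ_three]
    have h0 := hy 0; have h1 := hy 1; have h2 := hy 2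
    have d0 : (0:ℝ) ≤ dist (e3 x 0) (e3 y 0) := dist_nonneg
    have d1 : (0:ℝ) ≤ dist (e3 x 1) (e3 y 1) := dist_nonneg
    have d2 : (0:ℝ) ≤ dist (e3 x 2) (e3 y 2) := dist_nonneg
    nlinarith
  calc Real.sqrt (∑ i : Fin 3, dist (e3 x i) (e3 y i) ^ 2)
      ≤ Real.sqrt (3 * dist x y ^ 2) := Real.sqrt_le_sqrt h1
    _ = Real.sqrt 3 * dist x y := by
        rw [Real.sqrt_mul (by norm_num), Real.sqrt_sq dist_nonneg]

/-- radial projection is 2-Lipschitz outside the unit ball -/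
lemma lips_radial : LipschitzOnWith 2 (fun x : E3 => ‖x‖⁻¹ • x) {x : E3 | 1 ≤ ‖x‖} := by
  apply LipschitzOnWith.of_dist_le_mul
  intro x hx y hy
  simp only [Set.mem_setOf_eq] at hx hy
  have hxpos : (0:ℝ) < ‖x‖ := lt_of_lt_of_le one_pos hx
  have hypos : (0:ℝ) < ‖y‖ := lt_of_lt_of_le one_pos hy
  rw [dist_eq_norm, dist_eq_norm]
  have key : ‖x‖⁻¹ • x - ‖y‖⁻¹ • y = ‖x‖⁻¹ • (x - y) + (‖x‖⁻¹ - ‖y‖⁻¹) • y := by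
    rw [smul_sub, sub_smul]; abel
  rw [key]
  have h1 : ‖‖x‖⁻¹ • (x - y)‖ ≤ ‖x - y‖ := by
    rw [norm_smul, norm_inv, norm_norm]
    calc ‖x‖⁻¹ * ‖x - y‖ ≤ 1 * ‖x - y‖ := by
          apply mul_le_mul_of_nonneg_right _ (norm_nonneg _)
          exact inv_le_one_of_one_le₀ hx
      _ = ‖x - y‖ := one_mul _
  have h2 : ‖(‖x‖⁻¹ - ‖y‖⁻¹) • y‖ ≤ ‖x - y‖ := by
    rw [norm_smul, Real.norm_eq_abs]
    have habs : |‖x‖⁻¹ - ‖y‖⁻¹| = |‖y‖ - ‖x‖| / (‖x‖ * ‖y‖) := by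
      rw [inv_sub_inv (ne_of_gt hxpos) (ne_of_gt hypos), abs_div]
      congr 1
      exact abs_of_pos (mul_pos hxpos hypos)
    rw [habs]
    have hnn : |‖y‖ - ‖x‖| ≤ ‖x - y‖ := by
      rw [abs_sub_comm]
      exact (abs_norm_sub_norm_le x y).trans le_rfl
    calc |‖y‖ - ‖x‖| / (‖x‖ * ‖y‖) * ‖y‖ = |‖y‖ - ‖x‖| / ‖x‖ := by
          field_simp
      _ ≤ ‖x - y‖ / 1 :=
          div_le_div₀ (norm_nonneg _) hnn one_pos hx
      _ = ‖x - y‖ := div_one _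
  calc ‖‖x‖⁻¹ • (x - y) + (‖x‖⁻¹ - ‖y‖⁻¹) • y‖
      ≤ ‖‖x‖⁻¹ • (x - y)‖ + ‖(‖x‖⁻¹ - ‖y‖⁻¹) • y‖ := norm_add_le _ _
    _ ≤ ‖x - y‖ + ‖x - y‖ := add_le_add h1 h2
    _ = (2:ℝ≥0) * ‖x - y‖ := by push_cast; ring

lemma sphere_E3_sub :
    sphere (0 : E3) 1 ⊆ (fun x : E3 => ‖x‖⁻¹ • x) '' (e3 '' sphere (0 : Fin 3 → ℝ) 1) := by
  intro u hu
  have hu1 : ‖u‖ = 1 := by simpa using hu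
  set y : Fin 3 → ℝ := WithLp.equiv 2 (Fin 3 → ℝ) u with hy
  have hy0 : y ≠ 0 := by
    intro h
    have : u = 0 := by
      have := congrArg (WithLp.equiv 2 (Fin 3 → ℝ)).symm h
      simpa [hy] using this
    rw [this] at hu1; simp at hu1
  have ht : 0 < ‖y‖ := norm_pos_iff.2 hy0
  refine ⟨e3 (‖y‖⁻¹ • y), ⟨‖y‖⁻¹ • y, ?_, rfl⟩, ?_⟩
  · simp [norm_smul, abs_of_pos (inv_pos.2 ht), inv_mul_cancel₀ (ne_of_gt ht)]
  · have he : e3 (‖y‖⁻¹ • y) = ‖y‖⁻¹ • u := by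
      simp [e3, hy]
    rw [he]
    show ‖‖y‖⁻¹ • u‖⁻¹ • (‖y‖⁻¹ • u) = u
    rw [norm_smul, hu1]
    simp only [mul_one, norm_inv, norm_norm, inv_inv]
    rw [smul_smul, mul_inv_cancel₀ (ne_of_gt ht), one_smul]

lemma e3_norm_ge (x : Fin 3 → ℝ) : ‖x‖ ≤ ‖e3 x‖ := by
  refine (pi_norm_le_iff_of_nonneg (norm_nonneg _)).2 fun i => ?_
  have : (e3 x i) ^ 2 ≤ ‖e3 x‖ ^ 2 := by
    rw [EuclideanSpace.norm_eq]
    rw [Real.sq_sqrt (by positivity)]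
    have : ∀ j : Fin 3, (0:ℝ) ≤ ‖e3 x j‖ ^ 2 := fun j => by positivity
    calc (e3 x i) ^ 2 = ‖e3 x i‖ ^ 2 := by rw [Real.norm_eq_abs, sq_abs]
      _ ≤ ∑ j : Fin 3, ‖e3 x j‖ ^ 2 :=
          Finset.single_le_sum (fun j _ => this j) (Finset.mem_univ i)
  have hxi : e3 x i = x i := rfl
  rw [hxi] at this
  rw [Real.norm_eq_abs]
  have h0 : (0:ℝ) ≤ ‖e3 x‖ := norm_nonneg _
  nlinarith [abs_nonneg (x i), sq_abs (x i)]

lemma sphere_E3_fin : μH[2] (sphere (0 : E3) 1) < ⊤ := by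
  have hT : μH[2] (e3 '' sphere (0 : Fin 3 → ℝ) 1) < ⊤ := by
    refine lt_of_le_of_lt (lips_e3.hausdorffMeasure_image_le (by norm_num) _) ?_
    exact ENNReal.mul_lt_top (ENNReal.rpow_lt_top_of_nonneg (by norm_num) ENNReal.coe_ne_top)
      sphere_pi_fin
  have hsub : e3 '' sphere (0 : Fin 3 → ℝ) 1 ⊆ {x : E3 | 1 ≤ ‖x‖} := by
    rintro _ ⟨y, hy, rfl⟩
    have hy1 : ‖y‖ = 1 := by simpa using hy
    exact le_trans (le_of_eq hy1.symm) (e3_norm_ge y)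
  refine lt_of_le_of_lt (measure_mono sphere_E3_sub) ?_
  refine lt_of_le_of_lt ((lips_radial.mono hsub).hausdorffMeasure_image_le (by norm_num)) ?_
  exact ENNReal.mul_lt_top (ENNReal.rpow_lt_top_of_nonneg (by norm_num) ENNReal.coe_ne_top) hT

def sph' (A B : ℝ) : Set E3 :=
  {x : E3 | (x 0) ^ 2 / A ^ 2 + (x 1) ^ 2 / A ^ 2 + (x 2) ^ 2 / B ^ 2 = 1}

def strmap (A B : ℝ) (x : E3) : E3 := e3 ![A * x 0, A * x 1, B * x 2]

lemma strmap_apply (A B : ℝ) (x : E3) :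
    strmap A B x 0 = A * x 0 ∧ strmap A B x 1 = A * x 1 ∧ strmap A B x 2 = B * x 2 :=
  ⟨rfl, rfl, rfl⟩

lemma lips_strmap {A B : ℝ} (hA : 0 ≤ A) (hAB : A ≤ B) :
    LipschitzWith B.toNNReal (strmap A B) := by
  have hB : 0 ≤ B := hA.trans hAB
  apply LipschitzWith.of_dist_le_mul
  intro x y
  rw [Real.coe_toNNReal _ hB]
  rw [EuclideanSpace.dist_eq, EuclideanSpace.dist_eq]
  rw [Fin.sum_univ_three, Fin.sum_univ_three]
  have key : ∀ u v : ℝ, dist (A * u) (A * v) ^ 2 ≤ B ^ 2 * dist u v ^ 2 := by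
    intro u v
    rw [Real.dist_eq, Real.dist_eq, ← mul_sub, abs_mul]
    have h : |A| ≤ B := by rwa [abs_of_nonneg hA]
    rw [mul_pow]
    exact mul_le_mul_of_nonneg_right (pow_le_pow_left₀ (abs_nonneg A) h 2) (sq_nonneg _)
  have keyB : ∀ u v : ℝ, dist (B * u) (B * v) ^ 2 ≤ B ^ 2 * dist u v ^ 2 := by
    intro u v
    rw [Real.dist_eq, Real.dist_eq, ← mul_sub, abs_mul, abs_of_nonneg hB]
    nlinarith [abs_nonneg (u - v)]
  have h1 : dist (strmap A B x 0) (strmap A B y 0) ^ 2 + dist (strmap A B x 1) (strmap A B y 1) ^ 2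
      + dist (strmap A B x 2) (strmap A B y 2) ^ 2
      ≤ B ^ 2 * (dist (x 0) (y 0) ^ 2 + dist (x 1) (y 1) ^ 2 + dist (x 2) (y 2) ^ 2) := by
    rw [(strmap_apply A B x).1, (strmap_apply A B x).2.1, (strmap_apply A B x).2.2,
      (strmap_apply A B y).1, (strmap_apply A B y).2.1, (strmap_apply A B y).2.2]
    have := key (x 0) (y 0); have := key (x 1) (y 1); have := keyB (x 2) (y 2)
    linarith
  calc Real.sqrt (dist (strmap A B x 0) (strmap A B y 0) ^ 2
        + dist (strmap A B x 1) (strmap A B y 1) ^ 2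
        + dist (strmap A B x 2) (strmap A B y 2) ^ 2)
      ≤ Real.sqrt (B ^ 2 * (dist (x 0) (y 0) ^ 2 + dist (x 1) (y 1) ^ 2
          + dist (x 2) (y 2) ^ 2)) := Real.sqrt_le_sqrt h1
    _ = B * Real.sqrt (dist (x 0) (y 0) ^ 2 + dist (x 1) (y 1) ^ 2 + dist (x 2) (y 2) ^ 2) := by
        rw [Real.sqrt_mul (by positivity), Real.sqrt_sq hB]

lemma sph'_sub {A B : ℝ} (hA : 0 < A) (hB : 0 < B) :
    sph' A B ⊆ strmap A B '' sphere (0 : E3) 1 := by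
  intro x hx
  have hx' : (x 0) ^ 2 / A ^ 2 + (x 1) ^ 2 / A ^ 2 + (x 2) ^ 2 / B ^ 2 = 1 := hx
  refine ⟨e3 ![x 0 / A, x 1 / A, x 2 / B], ?_, ?_⟩
  · rw [mem_sphere_zero_iff_norm, EuclideanSpace.norm_eq, Fin.sum_univ_three]
    have c0 : e3 ![x 0 / A, x 1 / A, x 2 / B] 0 = x 0 / A := rfl
    have c1 : e3 ![x 0 / A, x 1 / A, x 2 / B] 1 = x 1 / A := rfl
    have c2 : e3 ![x 0 / A, x 1 / A, x 2 / B] 2 = x 2 / B := rfl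
    rw [c0, c1, c2]
    have : ‖x 0 / A‖ ^ 2 + ‖x 1 / A‖ ^ 2 + ‖x 2 / B‖ ^ 2 = 1 := by
      simp only [Real.norm_eq_abs, sq_abs]
      rw [div_pow, div_pow, div_pow]
      exact hx'
    rw [this, Real.sqrt_one]
  · have hco : ∀ j : Fin 3, strmap A B (e3 ![x 0 / A, x 1 / A, x 2 / B]) j = x j := by
      intro j
      fin_cases j
      · show A * (x 0 / A) = x 0; field_simp
      · show A * (x 1 / A) = x 1; field_simp
      · show B * (x 2 / B) = x 2; field_simp
    ext j
    exact hco j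

lemma sph'_fin {A B : ℝ} (hA : 0 < A) (hB : 0 < B) (hAB : A ≤ B) :
    μH[2] (sph' A B) < ⊤ := by
  refine lt_of_le_of_lt (measure_mono (sph'_sub hA hB)) ?_
  refine lt_of_le_of_lt ((lips_strmap hA.le hAB).hausdorffMeasure_image_le (by norm_num) _) ?_
  exact ENNReal.mul_lt_top (ENNReal.rpow_lt_top_of_nonneg (by norm_num) ENNReal.coe_ne_top)
    sphere_E3_fin

lemma sphS_eq_sph' (A B : ℝ) : sphS A B = sph' A B := rfl

lemma cont_sphGrad (A B : ℝ) : Continuous (sphGrad A B) := by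
  have h : ∀ i : Fin 3, Continuous fun x : E3 => x i := fun i =>
    (EuclideanSpace.proj (𝕜 := ℝ) i).continuous
  refine Continuous.comp (PiLp.continuous_toLp (p := 2) (β := fun _ : Fin 3 => ℝ)) ?_
  refine continuous_pi fun j => ?_
  fin_cases j
  · exact (h 0).div_const _
  · exact (h 1).div_const _
  · exact (h 2).div_const _

lemma meas_sphN (A B : ℝ) : Measurable (sphN A B) :=
  (((cont_sphGrad A B).norm.measurable).inv).smul (cont_sphGrad A B).measurable

lemma meas_partN (A B : ℝ) (c : E3) (s : ℝ) (R : E3 ≃ₗᵢ[ℝ] E3) :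
    Measurable (partN A B c s R) := by
  have h1 : Continuous fun y : E3 => s⁻¹ • R.symm (y - c) :=
    ((R.symm.continuous.comp (continuous_id.sub continuous_const))).const_smul s⁻¹
  exact R.continuous.measurable.comp ((meas_sphN A B).comp h1.measurable)

lemma norm_sphN_le_one (A B : ℝ) (x : E3) : ‖sphN A B x‖ ≤ 1 := by
  unfold sphN
  rcases eq_or_ne (sphGrad A B x) 0 with h | h
  · simp [h]
  · rw [norm_smul, norm_inv, norm_norm, inv_mul_cancel₀ (norm_ne_zero_iff.2 h)]

lemma norm_partN_le_one (A B : ℝ) (c : E3) (s : ℝ) (R : E3 ≃ₗᵢ[ℝ] E3) (y : E3) :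
    ‖partN A B c s R y‖ ≤ 1 := by
  unfold partN; rw [R.norm_map]; exact norm_sphN_le_one _ _ _



lemma ptbound {K ε t r v : ℝ} (hK : 0 < K) (hε : 0 < ε) (hv : 0 ≤ v)
    (ht : |t| ≤ v) (hr : |r| ≤ K) :
    t ^ 2 + 2 * |t| * |r| ≤ (1 + K * (ε⁻¹ * ε⁻¹)) * v ^ 2 + K * (ε * ε) := by
  have hεne : ε ≠ 0 := ne_of_gt hε
  have hinv : ε⁻¹ * ε = 1 := inv_mul_cancel₀ hεne
  have hv_eq : ε⁻¹ * ε * v = v := by rw [hinv, one_mul]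
  have h1 : t ^ 2 ≤ v ^ 2 := by nlinarith [sq_abs t, abs_nonneg t]
  have h2 : 2 * |t| * |r| ≤ 2 * (v * K) := by
    nlinarith [mul_le_mul ht hr (abs_nonneg r) hv]
  have h3 : 2 * v ≤ ε⁻¹ * ε⁻¹ * v ^ 2 + ε * ε := by
    nlinarith [sq_nonneg (ε⁻¹ * v - ε), hv_eq]
  nlinarith [mul_le_mul_of_nonneg_left h3 hK.le, h1, h2]


set_option maxHeartbeats 1600000 in
/-- replacement of the trace in the surface energy. Let `1 < α < 2`,
`g ∈ ℝ`, `K > 0` and let `𝒫 = sph b a` be a fixed closed prolate spheroid; for `ε > 0`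
consider the particle `𝒫^ε = x₀ + ε^α R 𝒫`, `R` a rotation. If `|w₀| ≤ K` and
`u ∈ L²(∂𝒫^ε; ℝ³)` satisfies `∫_{∂𝒫^ε} |u − w₀|² dσ ≤ K ε⁶`, then, with a constant `C`
depending only on `𝒫`, `g`, `K`, for all sufficiently small `ε`:
`|g ε^{3−2α} ∫_{∂𝒫^ε} (u·ν)² dσ − g ε^{3−2α} ∫_{∂𝒫^ε} (w₀·ν)² dσ| ≤ C ε^{7−2α}`. -/
theorem stmt9 (b a α g K : ℝ) (hb : 0 < b) (hba : b < a)
    (hα1 : 1 < α) (hα2 : α < 2) (hK : 0 < K) :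
    ∃ C : ℝ, 0 < C ∧ ∃ ε₁ : ℝ, 0 < ε₁ ∧ ∀ ε : ℝ, 0 < ε → ε < ε₁ →
      ∀ (x₀ : E3) (R : E3 ≃ₗᵢ[ℝ] E3), IsRotation R →
        ∀ (w₀ : E3) (u : E3 → E3), ‖w₀‖ ≤ K →
          MemLp u 2 (μH[2].restrict (partS b a x₀ (ε ^ α) R)) →
          (∫ y in partS b a x₀ (ε ^ α) R, ‖u y - w₀‖ ^ 2 ∂μH[2]) ≤ K * ε ^ (6 : ℝ) →
          |g * ε ^ (3 - 2 * α) *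
                (∫ y in partS b a x₀ (ε ^ α) R,
                  ⟪u y, partN b a x₀ (ε ^ α) R y⟫ ^ 2 ∂μH[2]) -
              g * ε ^ (3 - 2 * α) *
                (∫ y in partS b a x₀ (ε ^ α) R,
                  ⟪w₀, partN b a x₀ (ε ^ α) R y⟫ ^ 2 ∂μH[2])| ≤
            C * ε ^ (7 - 2 * α) := by
  have hMtop : μH[2] (sphS b a) < ⊤ := by
    rw [sphS_eq_sph']; exact sph'_fin hb (hb.trans hba) hba.le
  set m : ℝ := (μH[2] (sphS b a)).toReal with hm_def
  have hm0 : 0 ≤ m := ENNReal.toReal_nonneg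
  set D : ℝ := K + K ^ 2 + K * m with hD_def
  have hD : 0 < D := by positivity
  refine ⟨(|g| + 1) * D, by positivity, 1, one_pos, ?_⟩
  intro ε hε hε1 x₀ R hR w₀ u hw hu hint
  have hε1' : ε ≤ 1 := hε1.le
  have hεne : ε ≠ 0 := ne_of_gt hε
  set s := ε ^ α with hs_def
  have hs : 0 < s := Real.rpow_pos_of_pos hε α
  set S := partS b a x₀ s R with hS_def
  set μ := μH[2].restrict S with hμ_def
  set n := partN b a x₀ s R with hn_def
  have hn1 : ∀ y, ‖n y‖ ≤ 1 := fun y => norm_partN_le_one _ _ _ _ _ _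
  -- Lipschitz bound on the measure of S
  have hlip : LipschitzWith s.toNNReal (fun y : E3 => x₀ + s • R y) := by
    apply LipschitzWith.of_dist_le_mul
    intro y z
    rw [Real.coe_toNNReal _ hs.le, dist_add_left, dist_smul₀, R.dist_map,
      Real.norm_eq_abs, abs_of_pos hs]
  have hSmeas : μH[2] S ≤ (s.toNNReal : ℝ≥0∞) ^ (2 : ℝ) * μH[2] (sphS b a) :=
    hlip.hausdorffMeasure_image_le (by norm_num) (sphS b a)
  have hfin : μ Set.univ < ⊤ := by
    rw [hμ_def, Measure.restrict_apply_univ]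
    exact lt_of_le_of_lt hSmeas (ENNReal.mul_lt_top
      (ENNReal.rpow_lt_top_of_nonneg (by norm_num) ENNReal.coe_ne_top) hMtop)
  haveI : IsFiniteMeasure μ := ⟨hfin⟩
  have hμr : (μ Set.univ).toReal ≤ ε ^ (2 * α) * m := by
    have h1 : μ Set.univ ≤ (s.toNNReal : ℝ≥0∞) ^ (2 : ℝ) * μH[2] (sphS b a) := by
      rw [hμ_def, Measure.restrict_apply_univ]; exact hSmeas
    have hne : ((s.toNNReal : ℝ≥0∞) ^ (2 : ℝ) * μH[2] (sphS b a)) ≠ ⊤ :=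
      (ENNReal.mul_lt_top
        (ENNReal.rpow_lt_top_of_nonneg (by norm_num) ENNReal.coe_ne_top) hMtop).ne
    have h2 := ENNReal.toReal_mono hne h1
    rw [ENNReal.toReal_mul, ← ENNReal.toReal_rpow, ENNReal.coe_toReal,
      Real.coe_toNNReal _ hs.le] at h2
    refine h2.trans (le_of_eq ?_)
    rw [hs_def, ← Real.rpow_mul hε.le, mul_comm α 2]
  -- integrands and integrability
  have hnm : AEStronglyMeasurable n μ := (meas_partN b a x₀ s R).aestronglyMeasurable
  have huA : AEStronglyMeasurable (fun y => ⟪u y, n y⟫) μ :=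
    AEStronglyMeasurable.inner hu.1 hnm
  have hwB : AEStronglyMeasurable (fun y => ⟪w₀, n y⟫) μ :=
    AEStronglyMeasurable.inner aestronglyMeasurable_const hnm
  have hu_sq : Integrable (fun y => ‖u y‖ ^ 2) μ :=
    (memLp_two_iff_integrable_sq_norm hu.1).1 hu
  have hvmem : MemLp (fun y => u y - w₀) 2 μ := hu.sub (memLp_const w₀)
  have hv_sq : Integrable (fun y => ‖u y - w₀‖ ^ 2) μ :=
    (memLp_two_iff_integrable_sq_norm hvmem.1).1 hvmem
  have hA_int : Integrable (fun y => ⟪u y, n y⟫ ^ 2) μ := by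
    refine Integrable.mono' hu_sq (huA.pow 2) (Filter.Eventually.of_forall fun y => ?_)
    have h1 : |⟪u y, n y⟫| ≤ ‖u y‖ := by
      refine (abs_real_inner_le_norm _ _).trans ?_
      exact mul_le_of_le_one_right (norm_nonneg _) (hn1 y)
    rw [Real.norm_eq_abs, abs_of_nonneg (sq_nonneg _)]
    nlinarith [abs_nonneg ⟪u y, n y⟫, sq_abs ⟪u y, n y⟫, norm_nonneg (u y)]
  have hB_int : Integrable (fun y => ⟪w₀, n y⟫ ^ 2) μ := by
    refine Integrable.mono' (integrable_const (K ^ 2)) (hwB.pow 2)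
      (Filter.Eventually.of_forall fun y => ?_)
    have h1 : |⟪w₀, n y⟫| ≤ K := by
      refine (abs_real_inner_le_norm _ _).trans ?_
      refine (mul_le_of_le_one_right (norm_nonneg _) (hn1 y)).trans hw
    rw [Real.norm_eq_abs, abs_of_nonneg (sq_nonneg _)]
    nlinarith [abs_nonneg ⟪w₀, n y⟫, sq_abs ⟪w₀, n y⟫]
  -- pointwise bound
  have hpt : ∀ y, |⟪u y, n y⟫ ^ 2 - ⟪w₀, n y⟫ ^ 2| ≤
      (1 + K * (ε⁻¹ * ε⁻¹)) * ‖u y - w₀‖ ^ 2 + K * (ε * ε) := by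
    intro y
    have hAy : ⟪u y, n y⟫ = ⟪u y - w₀, n y⟫ + ⟪w₀, n y⟫ := by
      rw [inner_sub_left]; ring
    have ht : |⟪u y - w₀, n y⟫| ≤ ‖u y - w₀‖ := by
      refine (abs_real_inner_le_norm _ _).trans ?_
      exact mul_le_of_le_one_right (norm_nonneg _) (hn1 y)
    have hr : |⟪w₀, n y⟫| ≤ K := by
      refine (abs_real_inner_le_norm _ _).trans ?_
      exact (mul_le_of_le_one_right (norm_nonneg _) (hn1 y)).trans hw
    have hdiff : ⟪u y, n y⟫ ^ 2 - ⟪w₀, n y⟫ ^ 2 =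
        ⟪u y - w₀, n y⟫ ^ 2 + 2 * ⟪u y - w₀, n y⟫ * ⟪w₀, n y⟫ := by
      rw [hAy]; ring
    rw [hdiff]
    have habs : |⟪u y - w₀, n y⟫ ^ 2 + 2 * ⟪u y - w₀, n y⟫ * ⟪w₀, n y⟫| ≤
        ⟪u y - w₀, n y⟫ ^ 2 + 2 * |⟪u y - w₀, n y⟫| * |⟪w₀, n y⟫| := by
      refine (abs_add_le _ _).trans ?_
      rw [abs_of_nonneg (sq_nonneg (⟪u y - w₀, n y⟫ : ℝ)), abs_mul, abs_mul, abs_two]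
    refine habs.trans ?_
    exact ptbound hK hε (norm_nonneg _) ht hr
  -- the integral bound
  have hbd_int : Integrable
      (fun y => (1 + K * (ε⁻¹ * ε⁻¹)) * ‖u y - w₀‖ ^ 2 + K * (ε * ε)) μ :=
    (hv_sq.const_mul _).add (integrable_const _)
  have key : |(∫ y, ⟪u y, n y⟫ ^ 2 ∂μ) - ∫ y, ⟪w₀, n y⟫ ^ 2 ∂μ| ≤
      (1 + K * (ε⁻¹ * ε⁻¹)) * (∫ y, ‖u y - w₀‖ ^ 2 ∂μ) +
        K * (ε * ε) * (μ Set.univ).toReal := by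
    rw [← integral_sub hA_int hB_int]
    have h1 : |∫ y, (⟪u y, n y⟫ ^ 2 - ⟪w₀, n y⟫ ^ 2) ∂μ| ≤
        ∫ y, |⟪u y, n y⟫ ^ 2 - ⟪w₀, n y⟫ ^ 2| ∂μ := by
      simpa [Real.norm_eq_abs] using
        norm_integral_le_integral_norm (μ := μ)
          (fun y => ⟪u y, n y⟫ ^ 2 - ⟪w₀, n y⟫ ^ 2)
    refine h1.trans ?_
    have h2 : ∫ y, |⟪u y, n y⟫ ^ 2 - ⟪w₀, n y⟫ ^ 2| ∂μ ≤
        ∫ y, ((1 + K * (ε⁻¹ * ε⁻¹)) * ‖u y - w₀‖ ^ 2 + K * (ε * ε)) ∂μ :=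
      integral_mono (hA_int.sub hB_int).abs hbd_int fun y => hpt y
    refine h2.trans (le_of_eq ?_)
    rw [integral_add (hv_sq.const_mul _) (integrable_const _), integral_const_mul _ _,
      integral_const, smul_eq_mul, measureReal_def]
    ring
  -- numeric estimates
  have hIV0 : 0 ≤ ∫ y, ‖u y - w₀‖ ^ 2 ∂μ := integral_nonneg fun y => sq_nonneg _
  have hIVb : (∫ y, ‖u y - w₀‖ ^ 2 ∂μ) ≤ K * ε ^ (6 : ℕ) := by
    have h6 : ε ^ (6 : ℝ) = ε ^ (6 : ℕ) := by
      rw [← Real.rpow_natCast ε 6]; norm_num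
    rw [← h6]
    exact hint
  have step1 : (1 + K * (ε⁻¹ * ε⁻¹)) * (∫ y, ‖u y - w₀‖ ^ 2 ∂μ) ≤
      (1 + K * (ε⁻¹ * ε⁻¹)) * (K * ε ^ (6 : ℕ)) := by
    refine mul_le_mul_of_nonneg_left hIVb ?_
    positivity
  have step2 : (1 + K * (ε⁻¹ * ε⁻¹)) * (K * ε ^ (6 : ℕ)) =
      K * ε ^ (6 : ℕ) + K ^ 2 * ε ^ (4 : ℕ) := by
    field_simp
  have step3 : K * ε ^ (6 : ℕ) ≤ K * ε ^ (4 : ℕ) :=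
    mul_le_mul_of_nonneg_left
      (pow_le_pow_of_le_one hε.le hε1' (by norm_num)) hK.le
  have step4 : K * (ε * ε) * (μ Set.univ).toReal ≤ K * (ε * ε) * (ε ^ (2 * α) * m) :=
    mul_le_mul_of_nonneg_left hμr (by positivity)
  have step5 : K * (ε * ε) * (ε ^ (2 * α) * m) ≤ K * m * ε ^ (4 : ℕ) := by
    have e22 : ε * ε * ε ^ (2 * α) = ε ^ ((2 : ℝ) + 2 * α) := by
      rw [Real.rpow_add hε]
      congr 1
      rw [show (2 : ℝ) = ((2 : ℕ) : ℝ) by norm_num, Real.rpow_natCast]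
      ring
    have e23 : ε ^ ((2 : ℝ) + 2 * α) ≤ ε ^ ((4 : ℕ) : ℝ) :=
      Real.rpow_le_rpow_of_exponent_ge hε hε1' (by push_cast; linarith)
    rw [Real.rpow_natCast] at e23
    calc K * (ε * ε) * (ε ^ (2 * α) * m) = K * m * (ε * ε * ε ^ (2 * α)) := by ring
      _ = K * m * ε ^ ((2 : ℝ) + 2 * α) := by rw [e22]
      _ ≤ K * m * ε ^ (4 : ℕ) :=
          mul_le_mul_of_nonneg_left e23 (by positivity)
  have keyD : |(∫ y, ⟪u y, n y⟫ ^ 2 ∂μ) - ∫ y, ⟪w₀, n y⟫ ^ 2 ∂μ| ≤ D * ε ^ (4 : ℕ) := by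
    refine key.trans ?_
    have hst := step1.trans (le_of_eq step2)
    rw [hD_def]
    linarith [hst, step3, step4.trans step5]
  -- conclusion
  have hX : (0 : ℝ) < ε ^ (3 - 2 * α) := Real.rpow_pos_of_pos hε _
  have hfinal : |g * ε ^ (3 - 2 * α) * (∫ y, ⟪u y, n y⟫ ^ 2 ∂μ) -
      g * ε ^ (3 - 2 * α) * ∫ y, ⟪w₀, n y⟫ ^ 2 ∂μ| ≤ (|g| + 1) * D * ε ^ (7 - 2 * α) := by
    have h1 : g * ε ^ (3 - 2 * α) * (∫ y, ⟪u y, n y⟫ ^ 2 ∂μ) -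
        g * ε ^ (3 - 2 * α) * ∫ y, ⟪w₀, n y⟫ ^ 2 ∂μ =
        (g * ε ^ (3 - 2 * α)) * ((∫ y, ⟪u y, n y⟫ ^ 2 ∂μ) - ∫ y, ⟪w₀, n y⟫ ^ 2 ∂μ) := by
      ring
    rw [h1, abs_mul, abs_mul, abs_of_pos hX]
    have h2 : |g| * ε ^ (3 - 2 * α) *
        |(∫ y, ⟪u y, n y⟫ ^ 2 ∂μ) - ∫ y, ⟪w₀, n y⟫ ^ 2 ∂μ| ≤
        |g| * ε ^ (3 - 2 * α) * (D * ε ^ (4 : ℕ)) := by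
      refine mul_le_mul_of_nonneg_left keyD ?_
      positivity
    refine h2.trans ?_
    have h3 : ε ^ (3 - 2 * α) * ε ^ (4 : ℕ) = ε ^ (7 - 2 * α) := by
      rw [← Real.rpow_natCast ε 4, ← Real.rpow_add hε]
      congr 1
      norm_num
      ring
    have h4 : |g| * ε ^ (3 - 2 * α) * (D * ε ^ (4 : ℕ)) =
        (|g| * D) * (ε ^ (3 - 2 * α) * ε ^ (4 : ℕ)) := by ring
    rw [h4, h3]
    refine mul_le_mul_of_nonneg_right ?_ (Real.rpow_pos_of_pos hε _).le
    nlinarith [abs_nonneg g, hD]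
  exact hfinal
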